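/- Let $(v_n)$ be a sequence of measurable functions on a finite measure space with $0 \le v_n \le 1$, converging weakly-star in $\sigma(L^\infty, L^1)$ to $v$, and suppose that $\liminf_{n\to\infty} v_n \ge v$ almost everywhere. Then some subsequence of $(v_n)$ converges to $v$ almost everywhere. -/

import Mathlib

open MeasureTheory Filter

/-- Dellacherie–Meyer lemma. If `(vₙ)` are measurable, `0 ≤ vₙ ≤ 1`,
converge weakly-star in `σ(L^∞, L^1)` to `v`, and `liminf vₙ ≥ v` a.e., then some
subsequence of `(vₙ)` converges to `v` a.e. -/
theorem weakStar_liminf_ae_subsequence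
    {E : Type*} [MeasurableSpace E] (μ : Measure E) [IsFiniteMeasure μ]
    (vn : ℕ → E → ℝ) (v : E → ℝ)
    (hmeas : ∀ n, Measurable (vn n)) (hvmeas : Measurable v)
    (hbd : ∀ n, ∀ᵐ x ∂μ, vn n x ∈ Set.Icc (0 : ℝ) 1)
    (hweak : ∀ g : E → ℝ, Integrable g μ →
      Tendsto (fun n => ∫ x, vn n x * g x ∂μ) atTop (nhds (∫ x, v x * g x ∂μ)))
    (hliminf : ∀ᵐ x ∂μ, v x ≤ liminf (fun n => vn n x) atTop) :
    ∃ φ : ℕ → ℕ, StrictMono φ ∧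
      ∀ᵐ x ∂μ, Tendsto (fun k => vn (φ k) x) atTop (nhds (v x)) := by
  have hbd' : ∀ᵐ x ∂μ, ∀ n, vn n x ∈ Set.Icc (0:ℝ) 1 := ae_all_iff.2 hbd
  have hvn_int : ∀ n, Integrable (vn n) μ := fun n =>
    (integrable_const (1:ℝ)).mono' (hmeas n).aestronglyMeasurable
      ((hbd n).mono fun x hx => by
        rw [Real.norm_eq_abs, abs_le]; exact ⟨by linarith [hx.1], hx.2⟩)
  -- v ≤ 1 a.e.
  have hv1 : ∀ᵐ x ∂μ, v x ≤ 1 := by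
    filter_upwards [hliminf, hbd'] with x hx hx2
    refine hx.trans (liminf_le_of_le (isBoundedUnder_of ⟨0, fun (n:ℕ) => (hx2 n).1⟩) ?_)
    intro b hb
    obtain ⟨n, hn⟩ := hb.exists
    exact hn.trans (hx2 n).2
  -- v ≥ 0 a.e.
  have hv0 : ∀ᵐ x ∂μ, 0 ≤ v x := by
    have key : ∀ k : ℕ, μ {x | v x ∈ Set.Icc (-((k:ℝ)+1)) (-(1/((k:ℝ)+1)))} = 0 := by
      intro k
      set B := {x | v x ∈ Set.Icc (-((k:ℝ)+1)) (-(1/((k:ℝ)+1)))} with hBdef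
      have hBm : MeasurableSet B := hvmeas measurableSet_Icc
      have hg : Integrable (B.indicator (fun _ => (1:ℝ))) μ :=
        (integrable_const 1).indicator hBm
      have heq : ∀ f : E → ℝ,
          ∫ x, f x * B.indicator (fun _ => (1:ℝ)) x ∂μ = ∫ x in B, f x ∂μ := by
        intro f
        rw [← integral_indicator hBm]
        congr 1
        funext x
        by_cases hx : x ∈ B <;> simp [hx]
      have hw := hweak _ hg
      simp only [heq] at hw
      have hnn : ∀ n, (0:ℝ) ≤ ∫ x in B, vn n x ∂μ := fun n =>
        integral_nonneg_of_ae ((ae_restrict_of_ae (hbd n)).mono fun x hx => hx.1)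
      have h0 : (0:ℝ) ≤ ∫ x in B, v x ∂μ := ge_of_tendsto hw (Eventually.of_forall hnn)
      have hvB : IntegrableOn v B μ := by
        refine Integrable.mono' (g := fun _ => ((k:ℝ)+1)) (integrable_const _)
          hvmeas.aestronglyMeasurable.restrict ?_
        refine ae_restrict_of_forall_mem hBm fun x hx => ?_
        have h1 : -((k:ℝ)+1) ≤ v x := hx.1
        have h2 : v x ≤ -(1/((k:ℝ)+1)) := hx.2
        have hk : (0:ℝ) < 1/((k:ℝ)+1) := by positivity
        rw [Real.norm_eq_abs, abs_le]
        show -((k:ℝ)+1) ≤ v x ∧ v x ≤ (k:ℝ)+1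
        constructor <;> nlinarith
      have hub : ∫ x in B, v x ∂μ ≤ (μ B).toReal • (-(1/((k:ℝ)+1))) := by
        rw [show (μ B).toReal = μ.real B from rfl, ← setIntegral_const]
        exact setIntegral_mono_on hvB (integrableOn_const (measure_ne_top μ B))
          hBm fun x hx => hx.2
      have hk : (0:ℝ) < 1/((k:ℝ)+1) := by positivity
      have htr : (μ B).toReal = 0 := by
        rw [smul_eq_mul] at hub
        nlinarith [ENNReal.toReal_nonneg (a := μ B)]
      exact (ENNReal.toReal_eq_zero_iff _).1 htr |>.resolve_right (measure_ne_top μ B)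
    have hsub : {x | v x < 0} ⊆ ⋃ k : ℕ, {x | v x ∈ Set.Icc (-((k:ℝ)+1)) (-(1/((k:ℝ)+1)))} := by
      intro x hx
      have hxv : (0:ℝ) < -v x := by simpa using hx
      obtain ⟨k, hk⟩ := exists_nat_ge (max (-v x) (1/(-v x)))
      refine Set.mem_iUnion.2 ⟨k, ?_, ?_⟩
      · have : -v x ≤ (k:ℝ) := le_trans (le_max_left _ _) hk
        linarith
      · have hk' : 1/(-v x) ≤ (k:ℝ) := le_trans (le_max_right _ _) hk
        have h1 : 1/(-v x) ≤ (k:ℝ)+1 := by linarith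
        have h2 : 1/((k:ℝ)+1) ≤ -v x := by
          rw [div_le_iff₀ (by positivity)]
          rw [div_le_iff₀ hxv] at h1
          nlinarith
        linarith
    have : μ {x | v x < 0} = 0 :=
      measure_mono_null hsub (measure_iUnion_null key)
    rw [ae_iff]
    simpa [not_le] using this
  have hv_int : Integrable v μ :=
    (integrable_const (1:ℝ)).mono' hvmeas.aestronglyMeasurable
      ((hv0.and hv1).mono fun x hx => by
        rw [Real.norm_eq_abs, abs_le]; exact ⟨by linarith [hx.1], hx.2⟩)
  -- pointwise convergence of the negative parts
  have hae_f : ∀ᵐ x ∂μ, Tendsto (fun n => max (v x - vn n x) 0) atTop (nhds 0) := by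
    filter_upwards [hliminf, hbd'] with x hx hx2
    rw [Metric.tendsto_atTop]
    intro ε hε
    have hcb : IsBoundedUnder (· ≥ ·) atTop (fun n => vn n x) :=
      isBoundedUnder_of ⟨0, fun (n:ℕ) => (hx2 n).1⟩
    have hlt : v x - ε < liminf (fun n => vn n x) atTop := lt_of_lt_of_le (by linarith) hx
    obtain ⟨N, hN⟩ := eventually_atTop.1 (eventually_lt_of_lt_liminf hlt hcb)
    refine ⟨N, fun n hn => ?_⟩
    have := hN n hn
    rw [Real.dist_eq, sub_zero, abs_of_nonneg (le_max_right _ _)]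
    exact max_lt (by linarith) hε
  have hf_int : ∀ n, Integrable (fun x => max (v x - vn n x) 0) μ := by
    intro n
    refine (integrable_const (1:ℝ)).mono'
      (((hvmeas.sub (hmeas n)).max measurable_const).aestronglyMeasurable) ?_
    filter_upwards [hv1, hbd n] with x h1 h2
    rw [Real.norm_eq_abs, abs_of_nonneg (le_max_right _ _)]
    exact max_le (by linarith [h2.1]) zero_le_one
  -- dominated convergence
  have hF : Tendsto (fun n => ∫ x, max (v x - vn n x) 0 ∂μ) atTop (nhds 0) := by
    have := tendsto_integral_of_dominated_convergence (fun _ => (1:ℝ))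
      (fun n => ((hvmeas.sub (hmeas n)).max measurable_const).aestronglyMeasurable)
      (integrable_const 1)
      (fun n => by
        filter_upwards [hv1, hbd n] with x h1 h2
        rw [Real.norm_eq_abs, abs_of_nonneg (le_max_right _ _)]
        exact max_le (by rw [Pi.sub_apply]; linarith [h2.1]) zero_le_one)
      (by simpa using hae_f)
    simpa using this
  -- weak convergence with g = 1
  have hG : Tendsto (fun n => ∫ x, vn n x ∂μ - ∫ x, v x ∂μ) atTop (nhds 0) := by
    have h := hweak (fun _ => 1) (integrable_const 1)
    simp only [mul_one] at h
    have h2 := h.sub (tendsto_const_nhds (α := ℕ) (f := atTop) (x := ∫ x, v x ∂μ))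
    simpa using h2
  -- L¹ convergence
  have habs : ∀ n, ∫ x, |vn n x - v x| ∂μ =
      (∫ x, vn n x ∂μ - ∫ x, v x ∂μ) + 2 * ∫ x, max (v x - vn n x) 0 ∂μ := by
    intro n
    have hpt : (fun x => |vn n x - v x|)
        = fun x => (vn n x - v x) + 2 * max (v x - vn n x) 0 := by
      funext x
      rcases le_total (vn n x) (v x) with h | h
      · rw [abs_of_nonpos (by linarith), max_eq_left (by linarith)]; ring
      · rw [abs_of_nonneg (by linarith), max_eq_right (by linarith)]; ring
    have h1 : Integrable (fun x => vn n x - v x) μ := (hvn_int n).sub hv_int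
    rw [hpt, integral_add h1 ((hf_int n).const_mul 2),
      integral_sub (hvn_int n) hv_int, integral_const_mul]
  have habsT : Tendsto (fun n => ∫ x, |vn n x - v x| ∂μ) atTop (nhds 0) := by
    simp only [habs]
    have := hG.add ((hF.const_mul 2))
    simpa using this
  have hsnorm : Tendsto (fun n => eLpNorm (vn n - v) 1 μ) atTop (nhds 0) := by
    have heq : ∀ n, eLpNorm (vn n - v) 1 μ = ENNReal.ofReal (∫ x, |vn n x - v x| ∂μ) := by
      intro n
      rw [eLpNorm_one_eq_lintegral_enorm,
        ← ofReal_integral_norm_eq_lintegral_enorm ((hvn_int n).sub hv_int)]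
      simp [Real.norm_eq_abs]
    simp only [heq]
    rw [← ENNReal.ofReal_zero]
    exact ENNReal.tendsto_ofReal habsT
  have hin : TendstoInMeasure μ vn atTop v :=
    tendstoInMeasure_of_tendsto_eLpNorm one_ne_zero
      (fun n => (hmeas n).aestronglyMeasurable) hvmeas.aestronglyMeasurable hsnorm
  exact hin.exists_seq_tendsto_ae
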